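/- Let a be a real-valued random variable with continuous distribution, mean zero and variance one, with CDF F. Then E[a·F(a)]² ≤ 1/12, with equality if and only if a is uniformly distributed on (-√3, √3). -/

import Mathlib

open MeasureTheory ProbabilityTheory Set Filter Topology

lemma aux_noatom (μ : Measure ℝ) [IsProbabilityMeasure μ]
    (hcont : Continuous fun x => cdf μ x) (x : ℝ) : μ {x} = 0 := by
  conv_lhs => rw [← measure_cdf μ]
  rw [StieltjesFunction.measure_singleton]
  have h1 : Function.leftLim (fun y => cdf μ y) x = cdf μ x :=
    leftLim_eq_of_tendsto ((hcont.tendsto x).mono_left nhdsWithin_le_nhds)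
  rw [show Function.leftLim (⇑(cdf μ)) x = Function.leftLim (fun y => cdf μ y) x from rfl, h1]
  simp

lemma aux_lint_cdf (μ : Measure ℝ) [IsProbabilityMeasure μ]
    (hatom : ∀ x : ℝ, μ {x} = 0) : ∫⁻ x, μ (Iic x) ∂μ = 1/2 := by
  set S : Set (ℝ × ℝ) := {p | p.2 ≤ p.1} with hS
  set S' : Set (ℝ × ℝ) := {p | p.1 ≤ p.2} with hS'
  have hSm : MeasurableSet S := (isClosed_le continuous_snd continuous_fst).measurableSet
  have hS'm : MeasurableSet S' := (isClosed_le continuous_fst continuous_snd).measurableSet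
  have h1 : μ.prod μ S = ∫⁻ x, μ (Iic x) ∂μ := by
    rw [Measure.prod_apply hSm]
    refine lintegral_congr fun x => ?_
    congr 1
  have h2 : μ.prod μ S' = ∫⁻ x, μ (Iic x) ∂μ := by
    rw [Measure.prod_apply_symm hS'm]
    refine lintegral_congr fun y => ?_
    congr 1
  have hdiag : μ.prod μ {p : ℝ × ℝ | p.1 = p.2} = 0 := by
    rw [Measure.prod_apply (isClosed_eq continuous_fst continuous_snd).measurableSet]
    have h : ∀ x : ℝ, μ (Prod.mk x ⁻¹' {p : ℝ × ℝ | p.1 = p.2}) = 0 := by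
      intro x
      have : Prod.mk x ⁻¹' {p : ℝ × ℝ | p.1 = p.2} = {x} := by
        ext y; simp [eq_comm]
      rw [this]; exact hatom x
    simp only [h]; simp
  have hunion : S ∪ S' = univ := by
    ext p; simp [hS, hS', le_total]
  have hinter : S ∩ S' = {p : ℝ × ℝ | p.1 = p.2} := by
    ext p; simp only [hS, hS', mem_inter_iff, mem_setOf_eq]
    constructor
    · rintro ⟨ha, hb⟩; exact le_antisymm hb ha
    · rintro h; exact ⟨h.ge, h.le⟩
  have key : μ.prod μ S + μ.prod μ S' = 1 := by
    rw [← measure_union_add_inter S hS'm, hunion, hinter, hdiag, add_zero, measure_univ]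
  rw [h1, h2, ← two_mul] at key
  rw [ENNReal.eq_div_iff (by norm_num) (by norm_num)]
  exact key

lemma aux_meas_Iic (μ : Measure ℝ) : Measurable fun x => μ (Iic x) :=
  Monotone.measurable (fun _ _ h => measure_mono (Iic_subset_Iic.mpr h))

lemma aux_diag (μ : Measure ℝ) [IsProbabilityMeasure μ]
    (hatom : ∀ x : ℝ, μ {x} = 0) : μ.prod μ {p : ℝ × ℝ | p.1 = p.2} = 0 := by
  rw [Measure.prod_apply (isClosed_eq continuous_fst continuous_snd).measurableSet]
  have h : ∀ x : ℝ, μ (Prod.mk x ⁻¹' {p : ℝ × ℝ | p.1 = p.2}) = 0 := by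
    intro x
    have : Prod.mk x ⁻¹' {p : ℝ × ℝ | p.1 = p.2} = {x} := by
      ext y; simp [eq_comm]
    rw [this]; exact hatom x
  simp only [h]; simp

lemma aux_lint_cdf_sq (μ : Measure ℝ) [IsProbabilityMeasure μ]
    (hatom : ∀ x : ℝ, μ {x} = 0) :
    ∫⁻ x, μ (Iic x) * μ (Iic x) ∂μ = 1/3 := by
  set P3 := μ.prod (μ.prod μ) with hP3
  set S₁ : Set (ℝ × ℝ × ℝ) := {q | q.2.1 ≤ q.1 ∧ q.2.2 ≤ q.1} with hS₁
  set S₂ : Set (ℝ × ℝ × ℝ) := {q | q.1 ≤ q.2.1 ∧ q.2.2 ≤ q.2.1} with hS₂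
  set S₃ : Set (ℝ × ℝ × ℝ) := {q | q.1 ≤ q.2.2 ∧ q.2.1 ≤ q.2.2} with hS₃
  have c1 : Continuous fun q : ℝ × ℝ × ℝ => q.1 := continuous_fst
  have c2 : Continuous fun q : ℝ × ℝ × ℝ => q.2.1 := continuous_fst.comp continuous_snd
  have c3 : Continuous fun q : ℝ × ℝ × ℝ => q.2.2 := continuous_snd.comp continuous_snd
  have hS₁m : MeasurableSet S₁ :=
    ((isClosed_le c2 c1).inter (isClosed_le c3 c1)).measurableSet
  have hS₂m : MeasurableSet S₂ :=
    ((isClosed_le c1 c2).inter (isClosed_le c3 c2)).measurableSet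
  have hS₃m : MeasurableSet S₃ :=
    ((isClosed_le c1 c3).inter (isClosed_le c2 c3)).measurableSet
  -- value of P3 S₁
  have h1 : P3 S₁ = ∫⁻ x, μ (Iic x) * μ (Iic x) ∂μ := by
    rw [hP3, Measure.prod_apply hS₁m]
    refine lintegral_congr fun x => ?_
    have : Prod.mk x ⁻¹' S₁ = Iic x ×ˢ Iic x := by
      ext p; simp [hS₁, Prod.le_def]
    rw [this, Measure.prod_prod]
  -- the common double integral for S₂ and S₃
  set f : ℝ → ℝ → ENNReal := fun x y => μ {z | x ≤ y ∧ z ≤ y} with hf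
  have hfm : AEMeasurable (Function.uncurry f) (μ.prod μ) := by
    have : Function.uncurry f =
        ({p : ℝ × ℝ | p.1 ≤ p.2}).indicator (fun p => μ (Iic p.2)) := by
      funext p
      by_cases h : p.1 ≤ p.2
      · have : {z | p.1 ≤ p.2 ∧ z ≤ p.2} = Iic p.2 := by ext z; simp [h]
        simp [Function.uncurry, hf, this, indicator_of_mem, h, mem_setOf_eq]
        rfl
      · have : {z | p.1 ≤ p.2 ∧ z ≤ p.2} = (∅ : Set ℝ) := by ext z; simp [h]
        simp [Function.uncurry, hf, this, indicator_of_notMem, h, mem_setOf_eq]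
    rw [this]
    exact (Measurable.indicator ((aux_meas_Iic μ).comp measurable_snd)
      (isClosed_le continuous_fst continuous_snd).measurableSet).aemeasurable
  have hswap : ∫⁻ x, ∫⁻ y, f x y ∂μ ∂μ = ∫⁻ x, μ (Iic x) * μ (Iic x) ∂μ := by
    rw [lintegral_lintegral_swap hfm]
    refine lintegral_congr fun y => ?_
    have : ∀ x, f x y = (Iic y).indicator (fun _ => μ (Iic y)) x := by
      intro x
      by_cases h : x ≤ y
      · have : {z | x ≤ y ∧ z ≤ y} = Iic y := by ext z; simp [h]
        simp [hf, this, indicator_of_mem, h]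
        rfl
      · have : {z | x ≤ y ∧ z ≤ y} = (∅ : Set ℝ) := by ext z; simp [h]
        simp [hf, this, indicator_of_notMem, h]
    simp_rw [this]
    rw [lintegral_indicator measurableSet_Iic]
    simp [mul_comm]
  have h2 : P3 S₂ = ∫⁻ x, μ (Iic x) * μ (Iic x) ∂μ := by
    rw [hP3, Measure.prod_apply hS₂m, ← hswap]
    refine lintegral_congr fun x => ?_
    have hpre : Prod.mk x ⁻¹' S₂ = {p : ℝ × ℝ | x ≤ p.1 ∧ p.2 ≤ p.1} := rfl
    have hsm : MeasurableSet {p : ℝ × ℝ | x ≤ p.1 ∧ p.2 ≤ p.1} :=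
      ((isClosed_le continuous_const continuous_fst).inter
        (isClosed_le continuous_snd continuous_fst)).measurableSet
    rw [hpre, Measure.prod_apply hsm]
    exact lintegral_congr fun y => rfl
  have h3 : P3 S₃ = ∫⁻ x, μ (Iic x) * μ (Iic x) ∂μ := by
    rw [hP3, Measure.prod_apply hS₃m, ← hswap]
    refine lintegral_congr fun x => ?_
    have hpre : Prod.mk x ⁻¹' S₃ = {p : ℝ × ℝ | x ≤ p.2 ∧ p.1 ≤ p.2} := rfl
    have hsm : MeasurableSet {p : ℝ × ℝ | x ≤ p.2 ∧ p.1 ≤ p.2} :=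
      ((isClosed_le continuous_const continuous_snd).inter
        (isClosed_le continuous_fst continuous_snd)).measurableSet
    rw [hpre, Measure.prod_apply_symm hsm]
    exact lintegral_congr fun y => rfl
  -- tie sets are null
  have hT1 : P3 {q : ℝ × ℝ × ℝ | q.1 = q.2.1} = 0 := by
    rw [hP3, Measure.prod_apply (isClosed_eq c1 c2).measurableSet]
    have h : ∀ x : ℝ, (μ.prod μ) (Prod.mk x ⁻¹' {q : ℝ × ℝ × ℝ | q.1 = q.2.1}) = 0 := by
      intro x
      have : Prod.mk x ⁻¹' {q : ℝ × ℝ × ℝ | q.1 = q.2.1} = {x} ×ˢ univ := by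
        ext ⟨y, z⟩; simp [eq_comm]
      rw [this, Measure.prod_prod, hatom x, zero_mul]
    simp only [h]; simp
  have hT2 : P3 {q : ℝ × ℝ × ℝ | q.1 = q.2.2} = 0 := by
    rw [hP3, Measure.prod_apply (isClosed_eq c1 c3).measurableSet]
    have h : ∀ x : ℝ, (μ.prod μ) (Prod.mk x ⁻¹' {q : ℝ × ℝ × ℝ | q.1 = q.2.2}) = 0 := by
      intro x
      have : Prod.mk x ⁻¹' {q : ℝ × ℝ × ℝ | q.1 = q.2.2} = univ ×ˢ {x} := by
        ext ⟨y, z⟩; simp [eq_comm]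
      rw [this, Measure.prod_prod, hatom x, mul_zero]
    simp only [h]; simp
  have hT3 : P3 {q : ℝ × ℝ × ℝ | q.2.1 = q.2.2} = 0 := by
    rw [hP3, Measure.prod_apply (isClosed_eq c2 c3).measurableSet]
    have h : ∀ x : ℝ, (μ.prod μ) (Prod.mk x ⁻¹' {q : ℝ × ℝ × ℝ | q.2.1 = q.2.2}) = 0 := by
      intro x
      have : Prod.mk x ⁻¹' {q : ℝ × ℝ × ℝ | q.2.1 = q.2.2} = {p : ℝ × ℝ | p.1 = p.2} := rfl
      rw [this, aux_diag μ hatom]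
    simp only [h]; simp
  -- intersections null
  have hI12 : P3 (S₁ ∩ S₂) = 0 := by
    refine measure_mono_null ?_ hT1
    rintro q ⟨⟨hq1, _⟩, ⟨hq2, _⟩⟩
    exact le_antisymm hq2 hq1
  have hI3 : P3 ((S₁ ∪ S₂) ∩ S₃) = 0 := by
    have hsub : (S₁ ∪ S₂) ∩ S₃ ⊆ {q : ℝ × ℝ × ℝ | q.1 = q.2.2} ∪ {q : ℝ × ℝ × ℝ | q.2.1 = q.2.2} := by
      rintro q ⟨h12, ⟨hq1, hq2⟩⟩
      rcases h12 with ⟨_, hz⟩ | ⟨_, hz⟩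
      · exact Or.inl (le_antisymm hq1 hz)
      · exact Or.inr (le_antisymm hq2 hz)
    exact measure_mono_null hsub
      (measure_union_null hT2 hT3)
  have hunion : S₁ ∪ S₂ ∪ S₃ = univ := by
    ext q
    simp only [hS₁, hS₂, hS₃, mem_union, mem_setOf_eq, mem_univ, iff_true]
    rcases le_total q.2.1 q.2.2 with h | h
    · rcases le_total q.1 q.2.2 with h' | h'
      · exact Or.inr ⟨h', h⟩
      · exact Or.inl (Or.inl ⟨h.trans h', h'⟩)
    · rcases le_total q.1 q.2.1 with h' | h'
      · exact Or.inl (Or.inr ⟨h', h⟩)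
      · exact Or.inl (Or.inl ⟨h', h.trans h'⟩)
  have key : P3 S₁ + P3 S₂ + P3 S₃ = 1 := by
    have e1 : P3 S₁ + P3 S₂ = P3 (S₁ ∪ S₂) := by
      rw [← measure_union_add_inter S₁ hS₂m, hI12, add_zero]
    have e2 : P3 (S₁ ∪ S₂) + P3 S₃ = 1 := by
      rw [← measure_union_add_inter (S₁ ∪ S₂) hS₃m, hI3, add_zero, hunion, measure_univ]
    rw [e1, e2]
  rw [h1, h2, h3] at key
  rw [ENNReal.eq_div_iff (by norm_num) (by norm_num)]
  calc (3 : ENNReal) * ∫⁻ x, μ (Iic x) * μ (Iic x) ∂μ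
      = (∫⁻ x, μ (Iic x) * μ (Iic x) ∂μ) + (∫⁻ x, μ (Iic x) * μ (Iic x) ∂μ)
        + (∫⁻ x, μ (Iic x) * μ (Iic x) ∂μ) := by ring
    _ = 1 := key

noncomputable def nuU : Measure ℝ :=
  ENNReal.ofReal (1 / (2 * Real.sqrt 3)) • volume.restrict (Set.Ioo (-Real.sqrt 3) (Real.sqrt 3))

lemma sqrt3_pos : (0:ℝ) < Real.sqrt 3 := Real.sqrt_pos.mpr (by norm_num)

lemma nuU_Iic (x : ℝ) (hx : x ∈ Icc (-Real.sqrt 3) (Real.sqrt 3)) :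
    nuU (Iic x) = ENNReal.ofReal (1/2 + x / (2 * Real.sqrt 3)) := by
  have h3 := sqrt3_pos
  rw [nuU, Measure.smul_apply, Measure.restrict_apply measurableSet_Iic, smul_eq_mul]
  have hvol : volume (Iic x ∩ Ioo (-Real.sqrt 3) (Real.sqrt 3))
      = ENNReal.ofReal (x + Real.sqrt 3) := by
    apply le_antisymm
    · calc volume (Iic x ∩ Ioo (-Real.sqrt 3) (Real.sqrt 3))
          ≤ volume (Ioc (-Real.sqrt 3) x) := by
            apply measure_mono
            rintro y ⟨hy1, hy2, _⟩
            exact ⟨hy2, hy1⟩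
      _ = ENNReal.ofReal (x + Real.sqrt 3) := by rw [Real.volume_Ioc]; ring_nf
    · calc ENNReal.ofReal (x + Real.sqrt 3) = volume (Ioo (-Real.sqrt 3) x) := by
            rw [Real.volume_Ioo]; ring_nf
      _ ≤ volume (Iic x ∩ Ioo (-Real.sqrt 3) (Real.sqrt 3)) := by
            apply measure_mono
            rintro y ⟨hy1, hy2⟩
            exact ⟨hy2.le, hy1, lt_of_lt_of_le hy2 hx.2⟩
  rw [hvol, ← ENNReal.ofReal_mul (by positivity)]
  congr 1
  field_simp
  ring
lemma nuU_Iic_low (x : ℝ) (hx : x ≤ -Real.sqrt 3) : nuU (Iic x) = 0 := by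
  rw [nuU, Measure.smul_apply, Measure.restrict_apply measurableSet_Iic, smul_eq_mul]
  have : Iic x ∩ Ioo (-Real.sqrt 3) (Real.sqrt 3) = ∅ := by
    ext y
    simp only [mem_inter_iff, mem_Iic, mem_Ioo, mem_empty_iff_false, iff_false, not_and]
    intro h1 h2
    linarith
  rw [this]; simp

lemma nuU_Iic_high (x : ℝ) (hx : Real.sqrt 3 ≤ x) : nuU (Iic x) = 1 := by
  have h3 := sqrt3_pos
  rw [nuU, Measure.smul_apply, Measure.restrict_apply measurableSet_Iic, smul_eq_mul]
  have : Iic x ∩ Ioo (-Real.sqrt 3) (Real.sqrt 3) = Ioo (-Real.sqrt 3) (Real.sqrt 3) := by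
    apply inter_eq_self_of_subset_right
    rintro y ⟨_, hy2⟩
    exact le_trans hy2.le hx
  rw [this, Real.volume_Ioo, ← ENNReal.ofReal_mul (by positivity)]
  rw [show (1 : ENNReal) = ENNReal.ofReal 1 by simp]
  congr 1
  field_simp
  ring

instance : IsProbabilityMeasure nuU := by
  constructor
  rw [nuU, Measure.smul_apply, Measure.restrict_apply_univ, smul_eq_mul, Real.volume_Ioo,
    ← ENNReal.ofReal_mul (by positivity)]
  rw [show (1 : ENNReal) = ENNReal.ofReal 1 by simp]
  congr 1
  have h3 := sqrt3_pos
  field_simp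
  ring

lemma aux_int_cdf (μ : Measure ℝ) [IsProbabilityMeasure μ]
    (hcont : Continuous fun x => cdf μ x) (hatom : ∀ x : ℝ, μ {x} = 0) :
    ∫ x, cdf μ x ∂μ = 1/2 := by
  rw [integral_eq_lintegral_of_nonneg_ae (ae_of_all _ (cdf_nonneg μ))
    hcont.aestronglyMeasurable]
  rw [lintegral_congr fun x => ofReal_cdf μ x, aux_lint_cdf μ hatom]
  simp [ENNReal.toReal_div]

lemma aux_int_cdf_sq (μ : Measure ℝ) [IsProbabilityMeasure μ]
    (hcont : Continuous fun x => cdf μ x) (hatom : ∀ x : ℝ, μ {x} = 0) :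
    ∫ x, (cdf μ x)^2 ∂μ = 1/3 := by
  have hc2 : Continuous fun x => (cdf μ x)^2 := hcont.pow 2
  rw [integral_eq_lintegral_of_nonneg_ae (ae_of_all _ fun x => sq_nonneg (cdf μ x))
    hc2.aestronglyMeasurable]
  have heq : ∀ x : ℝ, ENNReal.ofReal ((cdf μ x)^2) = μ (Iic x) * μ (Iic x) := by
    intro x
    rw [ENNReal.ofReal_pow (cdf_nonneg μ x), ofReal_cdf, sq]
  rw [lintegral_congr heq, aux_lint_cdf_sq μ hatom]
  simp [ENNReal.toReal_div]



lemma aux_cdf_linear (μ : Measure ℝ) [IsProbabilityMeasure μ]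
    (hcont : Continuous fun x => cdf μ x)
    (hatom : ∀ x : ℝ, μ {x} = 0)
    (c : ℝ) (hc : c ^ 2 = 1 / 12)
    (hA : μ {x | cdf μ x = 1/2 + c * x}ᶜ = 0) :
    μ = nuU := by
  have h3 := sqrt3_pos
  set A := {x | cdf μ x = 1/2 + c * x} with hAdef
  have hAc : IsClosed A :=
    isClosed_eq hcont (continuous_const.add (continuous_const.mul continuous_id))
  have hAm : MeasurableSet A := hAc.measurableSet
  have hc0 : c ≠ 0 := by intro h; rw [h] at hc; norm_num at hc
  have hμA : μ A = 1 := by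
    have := measure_add_measure_compl (μ := μ) hAm
    rw [hA, add_zero, measure_univ] at this
    exact this
  have hAne : A.Nonempty := nonempty_of_measure_ne_zero (by rw [hμA]; exact one_ne_zero)
  have hAsub : ∀ x ∈ A, |x| ≤ 1 / (2 * |c|) := by
    intro x hx
    have h0 : 0 ≤ cdf μ x := cdf_nonneg μ x
    have h1 : cdf μ x ≤ 1 := cdf_le_one μ x
    have hxA : cdf μ x = 1/2 + c * x := hx
    have habs : |c * x| ≤ 1/2 := by rw [abs_le]; constructor <;> linarith
    rw [abs_mul] at habs
    have hcabs : 0 < |c| := abs_pos.mpr hc0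
    rw [le_div_iff₀ (by positivity)]
    nlinarith
  have bddA : BddAbove A := ⟨1 / (2 * |c|), fun x hx => (abs_le.mp (hAsub x hx)).2⟩
  have bddB : BddBelow A := ⟨-(1 / (2 * |c|)), fun x hx => (abs_le.mp (hAsub x hx)).1⟩
  set m := sInf A with hmdef
  set M := sSup A with hMdef
  have hmA : m ∈ A := hAc.csInf_mem hAne bddB
  have hMA : M ∈ A := hAc.csSup_mem hAne bddA
  have hmM : m ≤ M := csInf_le_csSup hAne bddB bddA
  -- F m = 0
  have hIio : μ (Iio m) = 0 := by
    refine measure_mono_null ?_ hA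
    intro x hx hxA
    exact absurd (csInf_le bddB hxA) (not_le.mpr hx)
  have hIicm : μ (Iic m) = 0 := by
    have hsub : Iic m ⊆ Iio m ∪ {m} := by
      intro x hx
      rcases eq_or_lt_of_le (mem_Iic.mp hx) with h | h
      · exact Or.inr (by simp [h])
      · exact Or.inl h
    exact measure_mono_null hsub (measure_union_null hIio (hatom m))
  have hFm : cdf μ m = 0 := by
    have := ofReal_cdf μ m
    rw [hIicm] at this
    have h0 := cdf_nonneg μ m
    have := ENNReal.ofReal_eq_zero.mp this
    linarith
  have hmA' : cdf μ m = 1/2 + c * m := hmA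
  have hlm : 1/2 + c * m = 0 := by rw [← hmA']; exact hFm
  -- F M = 1
  have hIoi : μ (Ioi M) = 0 := by
    refine measure_mono_null ?_ hA
    intro x hx hxA
    exact absurd (le_csSup bddA hxA) (not_le.mpr hx)
  have hIicM : μ (Iic M) = 1 := by
    have : μ (Ioi M)ᶜ = μ univ - μ (Ioi M) :=
      measure_compl measurableSet_Ioi (measure_ne_top μ _)
    rw [compl_Ioi, hIoi, measure_univ, tsub_zero] at this
    exact this
  have hFM : cdf μ M = 1 := by
    have h := ofReal_cdf μ M
    rw [hIicM] at h
    exact ENNReal.ofReal_eq_one.mp h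
  have hMA' : cdf μ M = 1/2 + c * M := hMA
  have hlM : 1/2 + c * M = 1 := by rw [← hMA']; exact hFM
  -- c > 0 and c = 1/(2√3)
  have hcpos : 0 < c := by nlinarith
  have hceq : c = 1 / (2 * Real.sqrt 3) := by
    have hs2 : (1 / (2 * Real.sqrt 3)) ^ 2 = 1 / 12 := by
      rw [div_pow, mul_pow, Real.sq_sqrt (by norm_num : (0:ℝ) ≤ 3)]
      norm_num
    have hspos : 0 < 1 / (2 * Real.sqrt 3) := by positivity
    nlinarith [sq_nonneg (c - 1 / (2 * Real.sqrt 3)), sq_nonneg (c + 1 / (2 * Real.sqrt 3))]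
  have hm : m = -Real.sqrt 3 := by
    rw [hceq] at hlm
    field_simp at hlm
    linarith
  have hM : M = Real.sqrt 3 := by
    rw [hceq] at hlM
    field_simp at hlM
    linarith
  -- Icc m M ⊆ A
  have hIcc : Icc (-Real.sqrt 3) (Real.sqrt 3) ⊆ A := by
    rw [← hm, ← hM]
    intro x hx
    by_contra hxA
    have hmx : m < x := lt_of_le_of_ne hx.1 (by rintro rfl; exact hxA hmA)
    have hxM : x < M := lt_of_le_of_ne (hx.2) (by intro h; rw [h] at hxA; exact hxA hMA)
    have hB₁ne : (A ∩ Iic x).Nonempty := ⟨m, hmA, hmx.le⟩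
    have hB₁bdd : BddAbove (A ∩ Iic x) := ⟨x, fun y hy => hy.2⟩
    set u := sSup (A ∩ Iic x) with hudef
    have huB : u ∈ A ∩ Iic x := (hAc.inter isClosed_Iic).csSup_mem hB₁ne hB₁bdd
    have hux : u < x := lt_of_le_of_ne huB.2 (fun h => hxA (h ▸ huB.1))
    have hB₂ne : (A ∩ Ici x).Nonempty := ⟨M, hMA, hxM.le⟩
    have hB₂bdd : BddBelow (A ∩ Ici x) := ⟨x, fun y hy => hy.2⟩
    set v := sInf (A ∩ Ici x) with hvdef
    have hvB : v ∈ A ∩ Ici x := (hAc.inter isClosed_Ici).csInf_mem hB₂ne hB₂bdd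
    have hxv : x < v := lt_of_le_of_ne hvB.2 (fun h => hxA (h.symm ▸ hvB.1))
    have hgap : μ (Ioo u v) = 0 := by
      refine measure_mono_null ?_ hA
      intro y hy hyA
      rcases le_total y x with h | h
      · exact absurd (le_csSup hB₁bdd ⟨hyA, h⟩) (not_le.mpr hy.1)
      · exact absurd (csInf_le hB₂bdd ⟨hyA, h⟩) (not_le.mpr hy.2)
    have hIicv : μ (Iic v) ≤ μ (Iic u) := by
      have hsub : Iic v ⊆ Iic u ∪ (Ioo u v ∪ {v}) := by
        intro y hy
        rcases le_or_gt y u with h | h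
        · exact Or.inl h
        · rcases eq_or_lt_of_le (mem_Iic.mp hy) with h2 | h2
          · exact Or.inr (Or.inr (by simp [h2]))
          · exact Or.inr (Or.inl ⟨h, h2⟩)
      calc μ (Iic v) ≤ μ (Iic u) + μ (Ioo u v ∪ {v}) :=
            le_trans (measure_mono hsub) (measure_union_le _ _)
        _ = μ (Iic u) := by rw [measure_union_null hgap (hatom v), add_zero]
    have hFvu : cdf μ v ≤ cdf μ u := by
      rw [← ofReal_cdf, ← ofReal_cdf] at hIicv
      exact (ENNReal.ofReal_le_ofReal_iff (cdf_nonneg μ u)).mp hIicv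
    have huA : cdf μ u = 1/2 + c * u := huB.1
    have hvA : cdf μ v = 1/2 + c * v := hvB.1
    have huv : u < v := hux.trans hxv
    nlinarith [mul_pos hcpos (sub_pos.mpr huv)]
  -- conclude μ = nuU via equality of Iic measures
  refine Measure.ext_of_Iic μ nuU fun x => ?_
  rw [← ofReal_cdf μ x]
  rcases le_or_gt x (-Real.sqrt 3) with hx | hx
  · rw [nuU_Iic_low x hx]
    have hF3 : cdf μ (-Real.sqrt 3) = 0 := by
      have h' : cdf μ (-Real.sqrt 3) = 1/2 + c * (-Real.sqrt 3) :=
        hIcc ⟨le_refl _, by linarith⟩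
      rw [h', hceq]
      field_simp; norm_num
    have hle : cdf μ x ≤ 0 := hF3 ▸ monotone_cdf μ hx
    exact ENNReal.ofReal_eq_zero.mpr hle
  · rcases le_or_gt x (Real.sqrt 3) with hx2 | hx2
    · rw [nuU_Iic x ⟨hx.le, hx2⟩]
      have h' : cdf μ x = 1/2 + c * x := hIcc ⟨hx.le, hx2⟩
      rw [h', hceq]
      congr 1
      ring
    · rw [nuU_Iic_high x hx2.le]
      have hF3 : cdf μ (Real.sqrt 3) = 1 := by
        have h' : cdf μ (Real.sqrt 3) = 1/2 + c * Real.sqrt 3 :=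
          hIcc ⟨by linarith, le_refl _⟩
        rw [h', hceq]
        field_simp
        ring
      have h1 : (1:ℝ) ≤ cdf μ x := hF3 ▸ monotone_cdf μ hx2.le
      have h2 : cdf μ x ≤ 1 := cdf_le_one μ x
      rw [le_antisymm h2 h1]
      exact ENNReal.ofReal_one



/-- If `a` is a real random variable with continuous distribution, mean zero and
variance one, and `F` is its CDF, then `E[a·F(a)]² ≤ 1/12`, with equality iff `a`
is uniform on `(-√3, √3)`. -/
theorem sq_expectation_mul_cdf_le
    {Ω : Type*} [MeasureSpace Ω] [IsProbabilityMeasure (ℙ : Measure Ω)]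
    (a : Ω → ℝ) (ha : Measurable a)
    (hcont : Continuous fun x => cdf (Measure.map a ℙ) x)
    (hint : Integrable a ℙ) (hmean : ∫ ω, a ω = 0)
    (hint2 : Integrable (fun ω => (a ω) ^ 2) ℙ) (hvar : ∫ ω, (a ω) ^ 2 = 1) :
    (∫ ω, a ω * cdf (Measure.map a ℙ) (a ω)) ^ 2 ≤ 1 / 12 ∧
    ((∫ ω, a ω * cdf (Measure.map a ℙ) (a ω)) ^ 2 = 1 / 12 ↔
      Measure.map a ℙ =
        ENNReal.ofReal (1 / (2 * Real.sqrt 3)) •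
          volume.restrict (Set.Ioo (-Real.sqrt 3) (Real.sqrt 3))) := by
  have h3 := sqrt3_pos
  set μ := Measure.map a ℙ with hμ
  haveI : IsProbabilityMeasure μ := Measure.isProbabilityMeasure_map ha.aemeasurable
  have hatom : ∀ x : ℝ, μ {x} = 0 := aux_noatom μ hcont
  set F : ℝ → ℝ := fun x => cdf μ x with hFdef
  have hFc : Continuous F := hcont
  have hF0 : ∀ x, 0 ≤ F x := cdf_nonneg μ
  have hF1 : ∀ x, F x ≤ 1 := cdf_le_one μ
  have hFam : Measurable fun ω => F (a ω) := hFc.measurable.comp ha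
  -- integrability over ℙ
  have hFaint : Integrable (fun ω => F (a ω)) ℙ := by
    refine (integrable_const (1:ℝ)).mono' hFam.aestronglyMeasurable (ae_of_all _ fun ω => ?_)
    rw [Real.norm_eq_abs, abs_of_nonneg (hF0 _)]
    exact hF1 _
  have hFa2int : Integrable (fun ω => F (a ω)^2) ℙ := by
    refine (integrable_const (1:ℝ)).mono' (hFam.pow_const 2).aestronglyMeasurable
      (ae_of_all _ fun ω => ?_)
    rw [Real.norm_eq_abs, abs_of_nonneg (sq_nonneg _)]
    nlinarith [hF0 (a ω), hF1 (a ω)]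
  have haF : Integrable (fun ω => a ω * F (a ω)) ℙ := by
    have h := hint.bdd_mul hFam.aestronglyMeasurable
      (c := 1) (ae_of_all _ fun ω => by rw [Real.norm_eq_abs, abs_of_nonneg (hF0 _)]; exact hF1 _)
    refine h.congr (ae_of_all _ fun ω => mul_comm _ _)
  -- moments of F ∘ a
  have hEFa : ∫ ω, F (a ω) = 1/2 := by
    have h := integral_map (μ := ℙ) ha.aemeasurable hFc.aestronglyMeasurable
    rw [← hμ] at h
    rw [← h]
    exact aux_int_cdf μ hcont hatom
  have hEFa2 : ∫ ω, F (a ω)^2 = 1/3 := by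
    have h := integral_map (μ := ℙ) ha.aemeasurable (hFc.pow 2).aestronglyMeasurable
    rw [← hμ] at h; simp only [Pi.pow_apply] at h
    rw [← h]
    exact aux_int_cdf_sq μ hcont hatom
  set c := ∫ ω, a ω * F (a ω) with hcdef
  -- the squared deviation
  have hrw : (fun ω => (F (a ω) - 1/2 - c * a ω)^2)
      = fun ω => ((F (a ω)^2 - F (a ω) + 1/4) - (2*c) * (a ω * F (a ω)))
          + (c * a ω + c^2 * (a ω)^2) := by
    funext ω; ring
  have p1 : Integrable (fun ω => F (a ω)^2 - F (a ω) + 1/4) ℙ :=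
    (hFa2int.sub hFaint).add (integrable_const _)
  have hg2int : Integrable (fun ω => (F (a ω) - 1/2 - c * a ω)^2) ℙ := by
    rw [hrw]
    exact (p1.sub (haF.const_mul _)).add ((hint.const_mul c).add (hint2.const_mul _))
  have i3 : Integrable (fun ω => (2*c) * (a ω * F (a ω))) ℙ := haF.const_mul _
  have i1 : Integrable (fun ω => (F (a ω)^2 - F (a ω) + 1/4) - (2*c) * (a ω * F (a ω))) ℙ :=
    p1.sub i3
  have i4 : Integrable (fun ω => c * a ω) ℙ := hint.const_mul c
  have i5 : Integrable (fun ω => c^2 * (a ω)^2) ℙ := hint2.const_mul _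
  have i2 : Integrable (fun ω => c * a ω + c^2 * (a ω)^2) ℙ := i4.add i5
  have i6 : Integrable (fun ω => F (a ω)^2 - F (a ω)) ℙ := hFa2int.sub hFaint
  have hEg : ∫ ω, (F (a ω) - 1/2 - c * a ω)^2 = 1/12 - c^2 := by
    rw [hrw, integral_add i1 i2,
      integral_sub p1 i3,
      integral_add i6 (integrable_const _),
      integral_sub hFa2int hFaint,
      integral_add i4 i5,
      integral_const_mul, integral_const_mul, integral_const_mul, integral_const,
      hEFa, hEFa2, hmean, hvar, ← hcdef]
    simp only [measure_univ, probReal_univ, ENNReal.toReal_one, smul_eq_mul, one_mul, mul_zero, mul_one]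
    ring
  have hEgnn : 0 ≤ ∫ ω, (F (a ω) - 1/2 - c * a ω)^2 :=
    integral_nonneg fun ω => sq_nonneg _
  constructor
  · linarith [hEg ▸ hEgnn]
  constructor
  · -- equality ⇒ uniform
    intro hceq
    have hEg0 : ∫ ω, (F (a ω) - 1/2 - c * a ω)^2 = 0 := by rw [hEg, hceq]; ring
    have hae : (fun ω => (F (a ω) - 1/2 - c * a ω)^2) =ᵐ[(ℙ : Measure Ω)] 0 :=
      (integral_eq_zero_iff_of_nonneg (fun ω => sq_nonneg _) hg2int).mp hEg0
    have hae' : ∀ᵐ ω ∂(ℙ : Measure Ω), F (a ω) = 1/2 + c * a ω := by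
      filter_upwards [hae] with ω hω
      have := pow_eq_zero_iff (n := 2) (by norm_num) |>.mp hω
      linarith
    have hAm : MeasurableSet {x : ℝ | cdf μ x = 1/2 + c * x} :=
      (isClosed_eq hcont (continuous_const.add (continuous_const.mul continuous_id))).measurableSet
    have hAc0 : μ {x | cdf μ x = 1/2 + c * x}ᶜ = 0 := by
      rw [hμ, Measure.map_apply ha hAm.compl]
      have : a ⁻¹' {x | cdf μ x = 1/2 + c * x}ᶜ
          = {ω | ¬ (F (a ω) = 1/2 + c * a ω)} := rfl
      rw [this]
      exact ae_iff.mp hae'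
    exact aux_cdf_linear μ hcont hatom c hceq hAc0
  · -- uniform ⇒ equality
    intro hmap
    have hmap' : μ = nuU := hmap
    set s : ℝ := 1 / (2 * Real.sqrt 3) with hsdef
    have hs2 : s ^ 2 = 1 / 12 := by
      rw [hsdef, div_pow, mul_pow, Real.sq_sqrt (by norm_num : (0:ℝ) ≤ 3)]
      norm_num
    -- cdf of nuU on Icc
    have hcdfx : ∀ x ∈ Icc (-Real.sqrt 3) (Real.sqrt 3), F x = 1/2 + s * x := by
      intro x hx
      have h1 : ENNReal.ofReal (F x) = μ (Iic x) := ofReal_cdf μ x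
      have h2 : μ (Iic x) = ENNReal.ofReal (1/2 + x / (2 * Real.sqrt 3)) := by
        rw [hmap']
        exact nuU_Iic x hx
      have hnn : (0:ℝ) ≤ 1/2 + x / (2 * Real.sqrt 3) := by
        have h1 : (-Real.sqrt 3) / (2 * Real.sqrt 3) ≤ x / (2 * Real.sqrt 3) :=
          (div_le_div_iff_of_pos_right (by positivity)).mpr hx.1
        have h2 : (-Real.sqrt 3) / (2 * Real.sqrt 3) = -(1/2) := by
          rw [div_eq_iff (by positivity)]
          ring
        linarith
      have := h1.trans h2
      have hFx := (ENNReal.ofReal_eq_ofReal_iff (hF0 x) hnn).mp this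
      rw [hFx, hsdef]
      ring
    -- a.e. a ω ∈ Icc
    have hIccm : MeasurableSet (Icc (-Real.sqrt 3) (Real.sqrt 3)) := measurableSet_Icc
    have hμIcc : μ (Icc (-Real.sqrt 3) (Real.sqrt 3))ᶜ = 0 := by
      rw [hmap', nuU, Measure.smul_apply,
        Measure.restrict_apply hIccm.compl, smul_eq_mul]
      have : (Icc (-Real.sqrt 3) (Real.sqrt 3))ᶜ ∩ Ioo (-Real.sqrt 3) (Real.sqrt 3) = ∅ := by
        rw [← subset_empty_iff]
        rintro y ⟨hy1, hy2⟩
        exact hy1 ⟨hy2.1.le, hy2.2.le⟩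
      rw [this]
      simp
    have haeIcc : ∀ᵐ ω ∂(ℙ : Measure Ω), a ω ∈ Icc (-Real.sqrt 3) (Real.sqrt 3) := by
      rw [ae_iff]
      have : {ω | ¬ a ω ∈ Icc (-Real.sqrt 3) (Real.sqrt 3)}
          = a ⁻¹' (Icc (-Real.sqrt 3) (Real.sqrt 3))ᶜ := rfl
      rw [this, ← Measure.map_apply ha hIccm.compl, ← hμ]
      exact hμIcc
    have haeF : ∀ᵐ ω ∂(ℙ : Measure Ω), a ω * F (a ω) = a ω / 2 + s * (a ω)^2 := by
      filter_upwards [haeIcc] with ω hω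
      rw [hcdfx _ hω]
      ring
    have hc_eq_s : c = s := by
      rw [hcdef, integral_congr_ae haeF, integral_add (hint.div_const 2) (hint2.const_mul s),
        integral_div, integral_const_mul, hmean, hvar]
      ring
    rw [hc_eq_s, hs2]
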